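/- Let d ≥ 2 and let β = exp(2πi/(d²−1)). Define F(T) = (T^{d−1}−1)/(T^d (T−1)) + (T^{d(d−1)}−1)/(T^{d²}(T^d−1)). Then for all integers j, k not divisible by d+1, F(β^j) = F(β^k) implies k ≡ j or k ≡ jd (mod d²−1). -/

import Mathlib

/-- The rational function
`F(T) = (T^{d-1}-1)/(T^d (T-1)) + (T^{d(d-1)}-1)/(T^{d²}(T^d-1))`. -/
noncomputable def Ffun (d : ℕ) (T : ℂ) : ℂ :=
  (T ^ (d - 1) - 1) / (T ^ d * (T - 1)) +
    (T ^ (d * (d - 1)) - 1) / (T ^ (d ^ 2) * (T ^ d - 1))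

open Complex Real

lemma Ffun_eq (d : ℕ) (hd : 2 ≤ d) (T : ℂ) (hT : T ^ (d ^ 2 - 1) = 1)
    (hT0 : T ≠ 0) (h1 : T - 1 ≠ 0) (hd1 : T ^ d - 1 ≠ 0) :
    Ffun d T = (T ^ (d - 1) - 1) ^ 2 / (T ^ (d - 1) * (T - 1) * (T ^ d - 1)) := by
  obtain ⟨e, rfl⟩ : ∃ e, d = e + 2 := ⟨d - 2, by omega⟩
  have hexp : (e + 2) ^ 2 - 1 = e ^ 2 + 4 * e + 3 := by
    have : (e + 2) ^ 2 = e ^ 2 + 4 * e + 4 := by ring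
    omega
  rw [hexp] at hT
  have h4 : T ^ ((e + 2) ^ 2) = T := by
    have : (e + 2) ^ 2 = (e ^ 2 + 4 * e + 3) + 1 := by ring
    rw [this, pow_succ, hT, one_mul]
  have h5 : T ^ ((e + 2) * ((e + 2) - 1)) * T ^ ((e + 2) - 1) = 1 := by
    rw [← pow_add]
    have : (e + 2) * ((e + 2) - 1) + ((e + 2) - 1) = e ^ 2 + 4 * e + 3 := by
      have h2 : (e + 2) - 1 = e + 1 := by omega
      rw [h2]; ring
    rw [this, hT]
  have hne : T ^ ((e + 2) - 1) ≠ 0 := pow_ne_zero _ hT0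
  have h5' : T ^ ((e + 2) * ((e + 2) - 1)) = (T ^ ((e + 2) - 1))⁻¹ := by
    field_simp
    exact h5
  rw [Ffun, h4, h5']
  have hsub : (e + 2) - 1 = e + 1 := by omega
  rw [hsub]
  have hne' : T ^ (e + 1) ≠ 0 := pow_ne_zero _ hT0
  field_simp
  ring

lemma sineFormula (d : ℕ) (hd : 2 ≤ d) (x : ℝ)
    (h1 : Complex.exp ((2 * x : ℝ) * Complex.I) ≠ 1)
    (hdx : Complex.exp ((2 * x : ℝ) * Complex.I) ^ d ≠ 1)
    (hn : Complex.exp ((2 * x : ℝ) * Complex.I) ^ (d ^ 2 - 1) = 1) :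
    Ffun d (Complex.exp ((2 * x : ℝ) * Complex.I))
      = Complex.exp ((-(((d : ℝ) + 1) * x) : ℝ) * Complex.I) *
        ((Real.sin (((d : ℝ) - 1) * x)) ^ 2 / (Real.sin x * Real.sin ((d : ℝ) * x)) : ℝ) := by
  obtain ⟨e, rfl⟩ : ∃ e, d = e + 2 := ⟨d - 2, by omega⟩
  set A : ℂ := Complex.exp ((x : ℝ) * Complex.I) with hA
  have hA0 : A ≠ 0 := Complex.exp_ne_zero _
  have hpow : ∀ m : ℕ, Complex.exp ((m : ℂ) * x * Complex.I) = A ^ m := by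
    intro m
    rw [hA, ← Complex.exp_nat_mul]
    ring_nf
  have hpowneg : ∀ m : ℕ, Complex.exp (-((m : ℂ) * x * Complex.I)) = (A ^ m)⁻¹ := by
    intro m
    rw [Complex.exp_neg, hpow m]
  have hsin : ∀ m : ℕ, Complex.sin ((m : ℂ) * x) = ((A ^ m)⁻¹ - A ^ m) * Complex.I / 2 := by
    intro m
    simp only [Complex.sin]
    rw [show (-((m:ℂ) * x) * Complex.I) = -((m : ℂ) * x * Complex.I) by ring, hpowneg m,
      show (((m:ℂ) * x) * Complex.I) = (m : ℂ) * x * Complex.I by ring, hpow m]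
  have hA2 : Complex.exp ((2 * x : ℝ) * Complex.I) = A ^ 2 := by
    rw [← hpow 2]; push_cast; ring_nf
  rw [hA2] at h1 hdx hn ⊢
  rw [Ffun_eq (e + 2) hd _ hn (pow_ne_zero _ hA0) (sub_ne_zero.2 h1) (sub_ne_zero.2 hdx)]
  push_cast
  rw [show ((e:ℂ) + 2 - 1) * (x:ℂ) = ((e+1 : ℕ) : ℂ) * x by push_cast; ring,
    show ((e:ℂ) + 2) * (x:ℂ) = ((e+2 : ℕ) : ℂ) * x by push_cast; ring]
  have hsinx : Complex.sin (x:ℂ) = (A⁻¹ - A) * Complex.I / 2 := by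
    have := hsin 1; rwa [Nat.cast_one, one_mul, pow_one] at this
  rw [hsin (e+1), hsin (e+2), hsinx]
  rw [show (-((((e:ℂ)) + 2 + 1) * (x:ℂ)) * Complex.I) = -(((e+3 : ℕ) : ℂ) * x * Complex.I) by push_cast; ring]
  rw [hpowneg (e+3)]
  have hne1 : A ^ 2 - 1 ≠ 0 := sub_ne_zero.2 h1
  have hne2 : (A ^ 2) ^ (e + 2) - 1 ≠ 0 := sub_ne_zero.2 hdx
  have hB2 : (A ^ 2) ^ (e + 2) = (A ^ (e + 2)) ^ 2 := by
    rw [← pow_mul, ← pow_mul, Nat.mul_comm]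
  have hz1 : (1 : ℂ) - A ^ 2 ≠ 0 := fun h => hne1 (by linear_combination -h)
  have hz2 : (1 : ℂ) - (A ^ (e + 2)) ^ 2 ≠ 0 := fun h => hne2 (by rw [hB2]; linear_combination -h)
  have hr : ∀ m : ℕ, (A ^ m)⁻¹ - A ^ m = (1 - (A ^ m) ^ 2) / A ^ m := by
    intro m
    have := pow_ne_zero m hA0
    field_simp
  have hrx : A⁻¹ - A = (1 - A ^ 2) / A := by
    field_simp
  rw [hr (e + 1), hr (e + 2), hrx]
  rw [show (A ^ (e + 3))⁻¹ = 1 / A ^ (e + 3) by rw [one_div]]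
  have hAe1 : A ^ (e + 1) ≠ 0 := pow_ne_zero _ hA0
  have hAe2 : A ^ (e + 2) ≠ 0 := pow_ne_zero _ hA0
  have hAe3 : A ^ (e + 3) ≠ 0 := pow_ne_zero _ hA0
  have hS1 : (1 - A ^ 2) / A * Complex.I / 2 ≠ 0 :=
    div_ne_zero (mul_ne_zero (div_ne_zero hz1 hA0) Complex.I_ne_zero) two_ne_zero
  have hS2 : (1 - (A ^ (e + 2)) ^ 2) / A ^ (e + 2) * Complex.I / 2 ≠ 0 :=
    div_ne_zero (mul_ne_zero (div_ne_zero hz2 hAe2) Complex.I_ne_zero) two_ne_zero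
  have hD1 : (A ^ 2) ^ (e + 1) * (A ^ 2 - 1) * ((A ^ 2) ^ (e + 2) - 1) ≠ 0 :=
    mul_ne_zero (mul_ne_zero (pow_ne_zero _ (pow_ne_zero _ hA0)) hne1) hne2
  have hD2 : A ^ (e + 3) * ((1 - A ^ 2) / A * Complex.I / 2 * ((1 - (A ^ (e + 2)) ^ 2) / A ^ (e + 2) * Complex.I / 2)) ≠ 0 :=
    mul_ne_zero hAe3 (mul_ne_zero hS1 hS2)
  rw [div_mul_div_comm, one_mul, div_eq_div_iff hD1 hD2]
  field_simp
  ring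

lemma endgame (c1 c2 C s1 s2 : ℝ) (hs1 : s1 ≠ 0) (hs2 : s2 ≠ 0)
    (h1 : s1 ^ 2 = 1 - c1 ^ 2) (h2 : s2 ^ 2 = 1 - c2 ^ 2) (hC : C ^ 2 ≤ 1)
    (hcross : s1 ^ 2 * (c2 - C) = s2 ^ 2 * (c1 - C)) : c1 = c2 := by
  have e1 : (1 - c1 ^ 2) * (c2 - C) = (1 - c2 ^ 2) * (c1 - C) := by
    rw [← h1, ← h2]; exact hcross
  have hfac : (c2 - c1) * (1 + c1 * c2 - C * (c1 + c2)) = 0 := by linear_combination e1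
  rcases mul_eq_zero.1 hfac with h | h
  · linarith
  · exfalso
    have hp1 : 0 < s1 ^ 2 := by positivity
    have hp2 : 0 < s2 ^ 2 := by positivity
    have hc1 : c1 ^ 2 < 1 := by nlinarith
    have hc2 : c2 ^ 2 < 1 := by nlinarith
    have hCe : 1 + c1 * c2 = C * (c1 + c2) := by linarith
    have hsq : (1 + c1 * c2) ^ 2 = C ^ 2 * (c1 + c2) ^ 2 := by rw [hCe]; ring
    have key : (1 + c1 * c2) ^ 2 ≤ (c1 + c2) ^ 2 := by nlinarith [sq_nonneg (c1 + c2)]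
    nlinarith [mul_pos (by linarith : (0:ℝ) < 1 - c1 ^ 2) (by linarith : (0:ℝ) < 1 - c2 ^ 2)]

/-- With `β = exp(2πi/(d²−1))`, for integers `j, k` not divisible by `d + 1`,
`F(β^j) = F(β^k)` implies `k ≡ j` or `k ≡ jd (mod d²−1)`. -/
theorem stmt_15 (d : ℕ) (hd : 2 ≤ d)
    (β : ℂ) (hβ : β = Complex.exp (2 * Real.pi * Complex.I / ((d : ℂ) ^ 2 - 1)))
    (j k : ℤ) (hj : ¬ ((d : ℤ) + 1 ∣ j)) (hk : ¬ ((d : ℤ) + 1 ∣ k))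
    (hF : Ffun d (β ^ j) = Ffun d (β ^ k)) :
    k ≡ j [ZMOD ((d : ℤ) ^ 2 - 1)] ∨ k ≡ j * (d : ℤ) [ZMOD ((d : ℤ) ^ 2 - 1)] := by
  have hdZ : (2 : ℤ) ≤ (d : ℤ) := by exact_mod_cast hd
  have hdR : (2 : ℝ) ≤ (d : ℝ) := by exact_mod_cast hd
  set n : ℕ := d ^ 2 - 1 with hn
  have hn4 : 4 ≤ d ^ 2 := by nlinarith
  have hnpos : 0 < n := by omega
  have hnR : ((n : ℝ)) = (d : ℝ) ^ 2 - 1 := by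
    have : 1 ≤ d ^ 2 := by omega
    push_cast [hn, Nat.cast_sub this]
    ring
  have hnZ : ((n : ℤ)) = (d : ℤ) ^ 2 - 1 := by
    have : 1 ≤ d ^ 2 := by omega
    push_cast [hn, Nat.cast_sub this]
    ring
  have hnR0 : (n : ℝ) ≠ 0 := Nat.cast_ne_zero.2 (by omega)
  have hdm1R : (d : ℝ) - 1 ≠ 0 := by nlinarith
  have hdp1R : (d : ℝ) + 1 ≠ 0 := by nlinarith
  have hβ' : β = Complex.exp (((2 * π / n : ℝ)) * Complex.I) := by
    rw [hβ]
    congr 1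
    have hcast : ((d : ℂ) ^ 2 - 1) = ((n : ℝ) : ℂ) := by rw [hnR]; push_cast; ring
    rw [hcast]
    push_cast
    field_simp
  have hpowa : ∀ a : ℤ, β ^ a = Complex.exp ((2 * (π * a / n) : ℝ) * Complex.I) := by
    intro a
    rw [hβ', ← Complex.exp_int_mul]
    congr 1
    push_cast
    field_simp
  -- divisibility helpers
  have hd1Z : ((d : ℤ) + 1) ∣ (n : ℤ) := ⟨(d : ℤ) - 1, by rw [hnZ]; ring⟩
  have hcop : IsCoprime ((d : ℤ) + 1) (d : ℤ) := ⟨1, -1, by ring⟩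
  have hndvd : ∀ a : ℤ, ¬ ((d : ℤ) + 1 ∣ a) → ¬ ((n : ℤ) ∣ a) :=
    fun a ha h => ha (dvd_trans hd1Z h)
  have hndvdd : ∀ a : ℤ, ¬ ((d : ℤ) + 1 ∣ a) → ¬ ((n : ℤ) ∣ (d : ℤ) * a) := by
    intro a ha h
    exact ha (hcop.dvd_of_dvd_mul_left (dvd_trans hd1Z h))
  have hndvd1 : ∀ a : ℤ, ¬ ((d : ℤ) + 1 ∣ a) → ¬ ((n : ℤ) ∣ ((d : ℤ) - 1) * a) := by
    intro a ha h
    apply ha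
    obtain ⟨c, hc⟩ := h
    refine ⟨c, ?_⟩
    have hdm1 : ((d : ℤ) - 1) ≠ 0 := by omega
    apply mul_left_cancel₀ hdm1
    calc ((d:ℤ) - 1) * a = (n : ℤ) * c := hc
      _ = ((d:ℤ) - 1) * (((d:ℤ) + 1) * c) := by rw [hnZ]; ring
  -- sin nonzero
  have hsin0 : ∀ a : ℤ, ¬ ((n : ℤ) ∣ a) → Real.sin (π * a / n) ≠ 0 := by
    intro a ha h
    rw [Real.sin_eq_zero_iff] at h
    obtain ⟨m, hm⟩ := h
    apply ha
    refine ⟨m, ?_⟩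
    rw [eq_div_iff hnR0] at hm
    have h3 : (a : ℝ) = (n : ℝ) * m := by
      apply mul_left_cancel₀ Real.pi_ne_zero
      linear_combination -hm
    exact_mod_cast h3
  -- roots of unity facts
  have hβ0 : β ≠ 0 := by rw [hβ']; exact Complex.exp_ne_zero _
  have hone : ∀ a : ℤ, β ^ a = 1 ↔ (n : ℤ) ∣ a := by
    intro a
    constructor
    · intro h
      rw [hpowa a, Complex.exp_eq_one_iff] at h
      obtain ⟨m, hm⟩ := h
      refine ⟨m, ?_⟩
      have hm' : ((2 * (π * a / n) : ℝ) : ℂ) * Complex.I = ((2 * π * m : ℝ) : ℂ) * Complex.I := by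
        rw [hm]; push_cast; ring
      have h2 := mul_right_cancel₀ Complex.I_ne_zero hm'
      have h3 : (2 * (π * (a:ℝ) / n) : ℝ) = 2 * π * m := by exact_mod_cast h2
      have h4 : (a : ℝ) = (n : ℝ) * m := by
        field_simp at h3
        apply mul_left_cancel₀ Real.pi_ne_zero
        linear_combination π * h3
      exact_mod_cast h4
    · rintro ⟨c, rfl⟩
      rw [hpowa, show (2 * (π * ((n : ℤ) * c : ℤ) / n) : ℝ) = 2 * π * (c : ℝ) by push_cast; field_simp]
      rw [show ((2 * π * (c : ℝ) : ℝ) : ℂ) * Complex.I = (c : ℂ) * (2 * (π : ℂ) * Complex.I) by push_cast; ring]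
      exact Complex.exp_int_mul_two_pi_mul_I c
  -- sine formula applied to j and k
  have hsineF : ∀ a : ℤ, ¬ ((d : ℤ) + 1 ∣ a) →
      Ffun d (β ^ a) = Complex.exp ((-(((d : ℝ) + 1) * (π * a / n)) : ℝ) * Complex.I) *
        ((Real.sin (((d : ℝ) - 1) * (π * a / n))) ^ 2 /
          (Real.sin (π * a / n) * Real.sin ((d : ℝ) * (π * a / n))) : ℝ) := by
    intro a ha
    rw [hpowa a]
    apply sineFormula d hd
    · rw [← hpowa a]
      intro h
      exact hndvd a ha ((hone a).1 h)
    · rw [← hpowa a, ← zpow_natCast (β ^ a) d, ← zpow_mul]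
      intro h
      have h2 := (hone (a * d)).1 h
      rw [mul_comm] at h2
      exact hndvdd a ha h2
    · rw [← hpowa a, ← hn]
      have : (β ^ a) ^ ((n : ℕ) : ℤ) = 1 := by
        rw [← zpow_mul]
        exact (hone (a * n)).2 ⟨a, by ring⟩
      rw [← zpow_natCast (β ^ a) n]
      exact this
  -- main equation with sine formula
  have hFx := hF
  rw [hsineF j hj, hsineF k hk] at hFx
  set Rj : ℝ := Real.sin (((d : ℝ) - 1) * (π * j / n)) ^ 2 /
      (Real.sin (π * j / n) * Real.sin ((d : ℝ) * (π * j / n))) with hRjdef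
  set Rk : ℝ := Real.sin (((d : ℝ) - 1) * (π * k / n)) ^ 2 /
      (Real.sin (π * k / n) * Real.sin ((d : ℝ) * (π * k / n))) with hRkdef
  set Ej : ℂ := Complex.exp ((-(((d : ℝ) + 1) * (π * j / n)) : ℝ) * Complex.I) with hEjdef
  set Ek : ℂ := Complex.exp ((-(((d : ℝ) + 1) * (π * k / n)) : ℝ) * Complex.I) with hEkdef
  have hEj0 : Ej ≠ 0 := Complex.exp_ne_zero _
  have hEk0 : Ek ≠ 0 := Complex.exp_ne_zero _
  -- conjugation
  have hconjmul : ∀ (r s : ℝ), (starRingEnd ℂ) (Complex.exp ((r : ℝ) * Complex.I) * (s : ℝ))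
      = Complex.exp ((-r : ℝ) * Complex.I) * (s : ℝ) := by
    intro r s
    rw [map_mul, ← Complex.exp_conj, Complex.conj_ofReal]
    congr 2
    rw [map_mul, Complex.conj_ofReal, Complex.conj_I]
    push_cast
    ring
  have hstar0 := congrArg (starRingEnd ℂ) hFx
  rw [hEjdef, hEkdef, hconjmul, hconjmul] at hstar0
  simp only [neg_neg] at hstar0
  have hEjinv : Complex.exp (((((d : ℝ) + 1) * (π * j / n) : ℝ)) * Complex.I) * Ej = 1 := by
    rw [hEjdef, ← Complex.exp_add,
      show (((((d : ℝ) + 1) * (π * j / n) : ℝ)) : ℂ) * Complex.I +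
        ((-(((d : ℝ) + 1) * (π * j / n)) : ℝ) : ℂ) * Complex.I = 0 by push_cast; ring,
      Complex.exp_zero]
  have hEkinv : Complex.exp (((((d : ℝ) + 1) * (π * k / n) : ℝ)) * Complex.I) * Ek = 1 := by
    rw [hEkdef, ← Complex.exp_add,
      show (((((d : ℝ) + 1) * (π * k / n) : ℝ)) : ℂ) * Complex.I +
        ((-(((d : ℝ) + 1) * (π * k / n)) : ℝ) : ℂ) * Complex.I = 0 by push_cast; ring,
      Complex.exp_zero]
  have hstar2 : Ek * (Rj : ℝ) = Ej * (Rk : ℝ) := by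
    linear_combination (Ej * Ek) * hstar0 - ((Rj : ℂ) * Ek) * hEjinv + ((Rk : ℂ) * Ej) * hEkinv
  -- nonvanishing of ratios
  have hsxj : Real.sin (π * j / n) ≠ 0 := hsin0 j (hndvd j hj)
  have hsxk : Real.sin (π * k / n) ≠ 0 := hsin0 k (hndvd k hk)
  have hsdxj : Real.sin ((d : ℝ) * (π * j / n)) ≠ 0 := by
    rw [show (d : ℝ) * (π * j / n) = π * (((d : ℤ) * j : ℤ) : ℝ) / n by push_cast; ring]
    exact hsin0 _ (hndvdd j hj)
  have hsdxk : Real.sin ((d : ℝ) * (π * k / n)) ≠ 0 := by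
    rw [show (d : ℝ) * (π * k / n) = π * (((d : ℤ) * k : ℤ) : ℝ) / n by push_cast; ring]
    exact hsin0 _ (hndvdd k hk)
  have hsaj : Real.sin (((d : ℝ) - 1) * (π * j / n)) ≠ 0 := by
    rw [show ((d : ℝ) - 1) * (π * j / n) = π * ((((d : ℤ) - 1) * j : ℤ) : ℝ) / n by push_cast; ring]
    exact hsin0 _ (hndvd1 j hj)
  have hsbk : Real.sin (((d : ℝ) - 1) * (π * k / n)) ≠ 0 := by
    rw [show ((d : ℝ) - 1) * (π * k / n) = π * ((((d : ℤ) - 1) * k : ℤ) : ℝ) / n by push_cast; ring]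
    exact hsin0 _ (hndvd1 k hk)
  have hRj0 : Rj ≠ 0 := by
    rw [hRjdef]; exact div_ne_zero (pow_ne_zero _ hsaj) (mul_ne_zero hsxj hsdxj)
  have hRk0 : Rk ≠ 0 := by
    rw [hRkdef]; exact div_ne_zero (pow_ne_zero _ hsbk) (mul_ne_zero hsxk hsdxk)
  -- Ej^2 = Ek^2
  have h6 := congrArg₂ (· * ·) hFx hstar2.symm
  have h7 : Ej ^ 2 * ((Rj : ℂ) * (Rk : ℂ)) = Ek ^ 2 * ((Rj : ℂ) * (Rk : ℂ)) := by
    linear_combination h6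
  have hE2 : Ej ^ 2 = Ek ^ 2 :=
    mul_right_cancel₀ (mul_ne_zero (Complex.ofReal_ne_zero.2 hRj0) (Complex.ofReal_ne_zero.2 hRk0)) h7
  -- convert to β powers
  have hkey : ∀ a : ℤ,
      Complex.exp ((-(((d : ℝ) + 1) * (π * a / n)) : ℝ) * Complex.I) ^ 2 * β ^ (a * ((d : ℤ) + 1)) = 1 := by
    intro a
    rw [hpowa (a * ((d : ℤ) + 1)), sq, ← Complex.exp_add, ← Complex.exp_add]
    rw [show ((-(((d : ℝ) + 1) * (π * a / n)) : ℝ) : ℂ) * Complex.I +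
          ((-(((d : ℝ) + 1) * (π * a / n)) : ℝ) : ℂ) * Complex.I +
          ((2 * (π * ((a * ((d : ℤ) + 1) : ℤ) : ℝ) / n) : ℝ) : ℂ) * Complex.I = 0 by
        push_cast; ring]
    exact Complex.exp_zero
  have hββ : β ^ (j * ((d : ℤ) + 1)) = β ^ (k * ((d : ℤ) + 1)) := by
    have h8 : β ^ (j * ((d : ℤ) + 1)) * Ej ^ 2 = β ^ (k * ((d : ℤ) + 1)) * Ek ^ 2 := by
      rw [hEjdef, hEkdef, mul_comm, hkey j, mul_comm, hkey k]
    rw [hE2] at h8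
    exact mul_right_cancel₀ (pow_ne_zero _ hEk0) h8
  have hdvdnn : (n : ℤ) ∣ (j - k) * ((d : ℤ) + 1) := by
    apply (hone _).1
    rw [sub_mul, zpow_sub₀ hβ0, hββ, div_self (zpow_ne_zero _ hβ0)]
  obtain ⟨c, hc⟩ := hdvdnn
  have hjk : j - k = ((d : ℤ) - 1) * c := by
    have h9 : (j - k) * ((d : ℤ) + 1) = (((d : ℤ) - 1) * c) * ((d : ℤ) + 1) := by
      rw [hc, hnZ]; ring
    exact mul_right_cancel₀ (by omega) h9
  set t : ℤ := -c with htdef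
  have hkt : k = j + ((d : ℤ) - 1) * t := by rw [htdef]; linear_combination -hjk
  -- now the real part
  have hd21R : (d : ℝ) ^ 2 - 1 ≠ 0 := by nlinarith
  have hkR : (k : ℝ) = (j : ℝ) + ((d : ℝ) - 1) * t := by exact_mod_cast hkt
  have hyx : ((d : ℝ) + 1) * (π * k / n) = ((d : ℝ) + 1) * (π * j / n) + t * π := by
    rw [hkR, hnR]; field_simp; ring
  have hec : (-1 : ℝ) ^ t = 1 ∨ (-1 : ℝ) ^ t = -1 := by
    rcases Int.even_or_odd t with he | ho
    · exact Or.inl he.neg_one_zpow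
    · exact Or.inr ho.neg_one_zpow
  have he2 : (-1 : ℝ) ^ t * (-1 : ℝ) ^ t = 1 := by
    rcases hec with h | h <;> rw [h] <;> norm_num
  have hEsplit : Ek = Ej * (((-1 : ℝ) ^ t : ℝ) : ℂ) := by
    rw [hEkdef, hEjdef]
    rw [show (-(((d : ℝ) + 1) * (π * k / n)) : ℝ) = (-(((d : ℝ) + 1) * (π * j / n))) + (-(t * π)) by
      linear_combination -hyx]
    rw [Complex.ofReal_add, add_mul, Complex.exp_add]
    congr 1
    rw [show ((-((t : ℝ) * π) : ℝ) : ℂ) * Complex.I = ((-t : ℤ) : ℂ) * ((π : ℂ) * Complex.I) by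
      push_cast; ring]
    rw [Complex.exp_int_mul, Complex.exp_pi_mul_I, zpow_neg, ← inv_zpow, inv_neg, inv_one]
    push_cast
    ring
  rw [hEsplit, mul_assoc] at hFx
  have hr2 := mul_left_cancel₀ hEj0 hFx
  have hreq : Rj = (-1 : ℝ) ^ t * Rk := by exact_mod_cast hr2
  rw [hRjdef, hRkdef] at hreq
  -- product-to-sum
  have hprod : ∀ x : ℝ, Real.sin x * Real.sin ((d : ℝ) * x)
      = (Real.cos (((d : ℝ) - 1) * x) - Real.cos (((d : ℝ) + 1) * x)) / 2 := by
    intro x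
    have h := Real.cos_sub_cos (((d : ℝ) - 1) * x) (((d : ℝ) + 1) * x)
    rw [show ((((d : ℝ) - 1) * x + ((d : ℝ) + 1) * x) / 2) = (d : ℝ) * x by ring,
      show ((((d : ℝ) - 1) * x - ((d : ℝ) + 1) * x) / 2) = -x by ring, Real.sin_neg] at h
    linarith
  have hcosp : Real.cos (((d : ℝ) + 1) * (π * k / n)) = (-1 : ℝ) ^ t * Real.cos (((d : ℝ) + 1) * (π * j / n)) := by
    rw [hyx, show ((d : ℝ) + 1) * (π * j / n) + (t : ℝ) * π
        = (t : ℝ) * π - (-(((d : ℝ) + 1) * (π * j / n))) by ring,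
      Real.cos_int_mul_pi_sub, Real.cos_neg]
  rw [hprod (π * j / n), hprod (π * k / n), hcosp] at hreq
  -- denominators nonzero
  have hdj : Real.cos (((d : ℝ) - 1) * (π * j / n)) - Real.cos (((d : ℝ) + 1) * (π * j / n)) ≠ 0 := by
    intro h
    exact mul_ne_zero hsxj hsdxj (by rw [hprod (π * j / n), h, zero_div])
  have hdk : Real.cos (((d : ℝ) - 1) * (π * k / n)) - (-1 : ℝ) ^ t * Real.cos (((d : ℝ) + 1) * (π * j / n)) ≠ 0 := by
    intro h
    exact mul_ne_zero hsxk hsdxk (by rw [hprod (π * k / n), hcosp, h, zero_div])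
  -- cross multiplied equation
  have h8 : Real.sin (((d : ℝ) - 1) * (π * j / n)) ^ 2 *
        ((Real.cos (((d : ℝ) - 1) * (π * k / n)) - (-1 : ℝ) ^ t * Real.cos (((d : ℝ) + 1) * (π * j / n))) / 2)
      = (-1 : ℝ) ^ t * Real.sin (((d : ℝ) - 1) * (π * k / n)) ^ 2 *
        ((Real.cos (((d : ℝ) - 1) * (π * j / n)) - Real.cos (((d : ℝ) + 1) * (π * j / n))) / 2) := by
    rw [show (-1 : ℝ) ^ t * (Real.sin (((d : ℝ) - 1) * (π * k / n)) ^ 2 /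
        ((Real.cos (((d : ℝ) - 1) * (π * k / n)) - (-1 : ℝ) ^ t * Real.cos (((d : ℝ) + 1) * (π * j / n))) / 2))
      = ((-1 : ℝ) ^ t * Real.sin (((d : ℝ) - 1) * (π * k / n)) ^ 2) /
        ((Real.cos (((d : ℝ) - 1) * (π * k / n)) - (-1 : ℝ) ^ t * Real.cos (((d : ℝ) + 1) * (π * j / n))) / 2)
      from (mul_div_assoc _ _ _).symm] at hreq
    rw [div_eq_div_iff (div_ne_zero_iff.2 ⟨hdj, two_ne_zero⟩) (div_ne_zero_iff.2 ⟨hdk, two_ne_zero⟩)] at hreq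
    linear_combination hreq
  have hcross : Real.sin (((d : ℝ) - 1) * (π * j / n)) ^ 2 *
        ((-1 : ℝ) ^ t * Real.cos (((d : ℝ) - 1) * (π * k / n)) - Real.cos (((d : ℝ) + 1) * (π * j / n)))
      = Real.sin (((d : ℝ) - 1) * (π * k / n)) ^ 2 *
        (Real.cos (((d : ℝ) - 1) * (π * j / n)) - Real.cos (((d : ℝ) + 1) * (π * j / n))) := by
    linear_combination (2 * (-1 : ℝ) ^ t) * h8 +
      (Real.sin (((d : ℝ) - 1) * (π * j / n)) ^ 2 * Real.cos (((d : ℝ) + 1) * (π * j / n)) +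
       Real.sin (((d : ℝ) - 1) * (π * k / n)) ^ 2 * Real.cos (((d : ℝ) - 1) * (π * j / n)) -
       Real.sin (((d : ℝ) - 1) * (π * k / n)) ^ 2 * Real.cos (((d : ℝ) + 1) * (π * j / n))) * he2
  -- apply endgame
  have hcc : Real.cos (((d : ℝ) - 1) * (π * j / n)) = (-1 : ℝ) ^ t * Real.cos (((d : ℝ) - 1) * (π * k / n)) := by
    apply endgame _ _ (Real.cos (((d : ℝ) + 1) * (π * j / n)))
      (Real.sin (((d : ℝ) - 1) * (π * j / n))) (Real.sin (((d : ℝ) - 1) * (π * k / n)))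
      hsaj hsbk (Real.sin_sq _) ?_ (Real.cos_sq_le_one _) hcross
    rw [mul_pow, Real.sin_sq]
    have hh : ((-1 : ℝ) ^ t) ^ 2 = 1 := by rw [sq]; exact he2
    rw [hh, one_mul]
  -- cos equality
  have hcoseq : Real.cos (((d : ℝ) - 1) * (π * j / n))
      = Real.cos ((t : ℝ) * π - (-(((d : ℝ) - 1) * (π * k / n)))) := by
    rw [Real.cos_int_mul_pi_sub, Real.cos_neg]
    exact hcc
  rw [Real.cos_eq_cos_iff] at hcoseq
  obtain ⟨m, hm | hm⟩ := hcoseq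
  · have h10 : (t : ℝ) * (n : ℝ) + ((d : ℝ) - 1) * k = 2 * m * n + ((d : ℝ) - 1) * j := by
      field_simp at hm
      apply mul_left_cancel₀ Real.pi_ne_zero
      linear_combination π * hm
    have hZ : t * (n : ℤ) + ((d : ℤ) - 1) * k = 2 * m * (n : ℤ) + ((d : ℤ) - 1) * j := by
      exact_mod_cast h10
    have h11 : ((d : ℤ) - 1) * (2 * ((d : ℤ) * t - m * ((d : ℤ) + 1))) = 0 := by
      linear_combination hZ - ((d : ℤ) - 1) * hkt - (t - 2 * m) * hnZ
    have h12 : (d : ℤ) * t = m * ((d : ℤ) + 1) := by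
      have h13 := (mul_eq_zero.1 h11).resolve_left (by omega : ((d : ℤ) - 1) ≠ 0)
      linarith
    have hdvt : ((d : ℤ) + 1) ∣ t := hcop.dvd_of_dvd_mul_left ⟨m, by linarith⟩
    obtain ⟨s, hs⟩ := hdvt
    left
    rw [Int.modEq_iff_dvd]
    exact ⟨-s, by linear_combination -hkt - ((d : ℤ) - 1) * hs⟩
  · have h10 : (t : ℝ) * (n : ℝ) + ((d : ℝ) - 1) * k = 2 * m * n - ((d : ℝ) - 1) * j := by
      field_simp at hm
      apply mul_left_cancel₀ Real.pi_ne_zero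
      linear_combination π * hm
    have hZ : t * (n : ℤ) + ((d : ℤ) - 1) * k = 2 * m * (n : ℤ) - ((d : ℤ) - 1) * j := by
      exact_mod_cast h10
    have h11 : ((d : ℤ) - 1) * (2 * (j + (d : ℤ) * t - m * ((d : ℤ) + 1))) = 0 := by
      linear_combination hZ - ((d : ℤ) - 1) * hkt - (t - 2 * m) * hnZ
    have h12 : j + (d : ℤ) * t = m * ((d : ℤ) + 1) := by
      have h13 := (mul_eq_zero.1 h11).resolve_left (by omega : ((d : ℤ) - 1) ≠ 0)
      linarith
    right
    rw [Int.modEq_iff_dvd]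
    exact ⟨m - t, by linear_combination -hkt + ((d : ℤ) - 1) * h12⟩
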